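/- Let M_v be a symmetric real n×n matrix, M_e an invertible real m×m matrix, g ∈ ℝⁿ a fixed vector, F : ℝ → ℝ^{n×m} any (matrix-valued) function, and let v : ℝ → ℝⁿ, e : ℝ → ℝᵐ, x : ℝ → ℝⁿ be differentiable functions satisfying the semidiscrete Lagrangian conservation laws M_v v'(t) = −F(t)·𝟙 + M_v g, M_e e'(t) = F(t)ᵀ v(t), and x'(t) = v(t), where 𝟙 ∈ ℝᵐ is the all-ones vector. Then the total discrete energy E(t) = ½ v(t)ᵀ M_v v(t) + 𝟙ᵀ M_e e(t) − (M_v g)ᵀ x(t) is constant in t. -/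

import Mathlib

open Matrix

private lemma hasDerivAt_dot_aux {k : ℕ} (c : Fin k → ℝ) {f : ℝ → Fin k → ℝ}
    {f' : Fin k → ℝ} {t : ℝ} (h : HasDerivAt f f' t) :
    HasDerivAt (fun s => c ⬝ᵥ f s) (c ⬝ᵥ f') t := by
  simp only [dotProduct]
  exact HasDerivAt.fun_sum fun i _ => ((hasDerivAt_pi.mp h) i).const_mul (c i)

private lemma hasDerivAt_quad_aux {k : ℕ} (M : Matrix (Fin k) (Fin k) ℝ)
    {f : ℝ → Fin k → ℝ} {f' : Fin k → ℝ} {t : ℝ} (h : HasDerivAt f f' t) :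
    HasDerivAt (fun s => f s ⬝ᵥ (M *ᵥ f s)) (f' ⬝ᵥ (M *ᵥ f t) + f t ⬝ᵥ (M *ᵥ f')) t := by
  simp only [dotProduct, mulVec, Finset.mul_sum]
  rw [← Finset.sum_add_distrib]
  apply HasDerivAt.fun_sum
  intro i _
  rw [← Finset.sum_add_distrib]
  apply HasDerivAt.fun_sum
  intro j _
  have h1 := (hasDerivAt_pi.mp h) i
  have h2 := (hasDerivAt_pi.mp h) j
  have := (h1.mul (h2.const_mul (M i j)))
  exact this

private lemma dot_mulVec_symm {k : ℕ} {M : Matrix (Fin k) (Fin k) ℝ} (hM : M.IsSymm)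
    (a b : Fin k → ℝ) : a ⬝ᵥ (M *ᵥ b) = b ⬝ᵥ (M *ᵥ a) := by
  rw [dotProduct_mulVec, ← mulVec_transpose, hM.eq, dotProduct_comm]

/-- Energy conservation for the semidiscrete Lagrangian hydrodynamics system with gravity:
if `M_v v' = −F·𝟙 + M_v g`, `M_e e' = Fᵀ v`, and `x' = v`, then the total discrete energy
`½ vᵀ M_v v + 𝟙ᵀ M_e e − (M_v g)ᵀ x` is constant in time. -/
theorem semidiscrete_energy_conservation_with_gravity {n m : ℕ}
    (Mv : Matrix (Fin n) (Fin n) ℝ) (Me : Matrix (Fin m) (Fin m) ℝ)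
    (hMv : Mv.IsSymm) (hMe : IsUnit Me.det)
    (g : Fin n → ℝ)
    (F : ℝ → Matrix (Fin n) (Fin m) ℝ)
    (v dv : ℝ → Fin n → ℝ) (e de : ℝ → Fin m → ℝ) (x dx : ℝ → Fin n → ℝ)
    (hv : ∀ t, HasDerivAt v (dv t) t)
    (he : ∀ t, HasDerivAt e (de t) t)
    (hx : ∀ t, HasDerivAt x (dx t) t)
    (hmom : ∀ t, Mv *ᵥ dv t = -(F t *ᵥ (fun _ => 1)) + Mv *ᵥ g)
    (hen : ∀ t, Me *ᵥ de t = (F t)ᵀ *ᵥ v t)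
    (hxeq : ∀ t, dx t = v t) :
    ∀ s t : ℝ,
      (1/2) * (v s ⬝ᵥ (Mv *ᵥ v s)) + (fun _ => (1:ℝ)) ⬝ᵥ (Me *ᵥ e s)
        - (Mv *ᵥ g) ⬝ᵥ x s
      = (1/2) * (v t ⬝ᵥ (Mv *ᵥ v t)) + (fun _ => (1:ℝ)) ⬝ᵥ (Me *ᵥ e t)
        - (Mv *ᵥ g) ⬝ᵥ x t := by
  set E : ℝ → ℝ := fun t =>
    (1/2) * (v t ⬝ᵥ (Mv *ᵥ v t)) + (fun _ => (1:ℝ)) ⬝ᵥ (Me *ᵥ e t)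
      - (Mv *ᵥ g) ⬝ᵥ x t with hE
  have hderiv : ∀ t, HasDerivAt E 0 t := by
    intro t
    have h1 : HasDerivAt (fun s => v s ⬝ᵥ (Mv *ᵥ v s))
        (dv t ⬝ᵥ (Mv *ᵥ v t) + v t ⬝ᵥ (Mv *ᵥ dv t)) t := hasDerivAt_quad_aux Mv (hv t)
    have h2 : HasDerivAt (fun s => (fun _ => (1:ℝ)) ⬝ᵥ (Me *ᵥ e s))
        ((fun _ => (1:ℝ)) ⬝ᵥ (Me *ᵥ de t)) t := by
      have := hasDerivAt_dot_aux ((fun _ => (1:ℝ)) ᵥ* Me) (he t)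
      simpa only [← dotProduct_mulVec] using this
    have h3 : HasDerivAt (fun s => (Mv *ᵥ g) ⬝ᵥ x s) ((Mv *ᵥ g) ⬝ᵥ dx t) t :=
      hasDerivAt_dot_aux (Mv *ᵥ g) (hx t)
    have hD := ((h1.const_mul (1/2)).add h2).sub h3
    refine hD.congr_deriv ?_
    rw [dot_mulVec_symm hMv (dv t) (v t), hmom t, hen t, hxeq t]
    have hflip : (fun _ => (1:ℝ)) ⬝ᵥ ((F t)ᵀ *ᵥ v t) = v t ⬝ᵥ (F t *ᵥ (fun _ => 1)) := by
      rw [dotProduct_mulVec, ← mulVec_transpose, transpose_transpose, dotProduct_comm]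
    rw [hflip]
    rw [dotProduct_add, dotProduct_neg, dotProduct_comm (Mv *ᵥ g) (v t)]
    ring
  intro s t
  exact is_const_of_deriv_eq_zero (fun u => (hderiv u).differentiableAt)
    (fun u => (hderiv u).deriv) s t
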